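/- Let d ≥ 1 and σ > 0. Define the Hermite heat kernel G_t(x,y) = (2π sinh(2t))^{-d/2} exp(-(1/4)[tanh(t)‖x+y‖² + coth(t)‖x−y‖²]) for x, y ∈ ℝ^d, t > 0. Then the potential kernel K^σ(x,y) = Γ(σ)^{-1} ∫_0^∞ G_t(x,y) t^{σ-1} dt satisfies K^σ(x,y) ≤ C exp(-‖x−y‖²/8) whenever ‖x−y‖ ≥ 1, with a constant C depending only on d and σ. -/

import Mathlib

open MeasureTheory Real Set

/-- The Hermite heat kernel on ℝ^d. -/
noncomputable def hermiteHeatKernel (d : ℕ) (t : ℝ) (x y : EuclideanSpace ℝ (Fin d)) : ℝ :=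
  (2 * Real.pi * Real.sinh (2 * t)) ^ (-(d : ℝ) / 2) *
    Real.exp (-(1 / 4) * (Real.tanh t * ‖x + y‖ ^ 2 +
      (Real.cosh t / Real.sinh t) * ‖x - y‖ ^ 2))

private lemma sinh_le_mul_cosh {t : ℝ} (ht : 0 ≤ t) : Real.sinh t ≤ t * Real.cosh t := by
  have h : MonotoneOn (fun s : ℝ => s * Real.cosh s - Real.sinh s) (Set.Ici 0) := by
    have hd : ∀ s : ℝ, HasDerivAt (fun s : ℝ => s * Real.cosh s - Real.sinh s)
        (s * Real.sinh s) s := by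
      intro s
      have h2 := ((hasDerivAt_id s).mul (Real.hasDerivAt_cosh s)).sub (Real.hasDerivAt_sinh s)
      exact h2.congr_deriv (by simp [mul_comm])
    apply monotoneOn_of_deriv_nonneg (convex_Ici 0)
    · exact Continuous.continuousOn (by continuity)
    · intro s _; exact ((hd s).differentiableAt).differentiableWithinAt
    · intro s hs
      rw [interior_Ici] at hs
      rw [(hd s).deriv]
      exact mul_nonneg hs.le (Real.sinh_nonneg_iff.2 hs.le)
  simpa using h Set.self_mem_Ici (Set.mem_Ici.2 ht) ht

private lemma one_le_coth {t : ℝ} (ht : 0 < t) : 1 ≤ Real.cosh t / Real.sinh t := by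
  rw [le_div_iff₀ (Real.sinh_pos_iff.2 ht)]
  simpa using (Real.sinh_lt_cosh (x := t)).le

private lemma inv_le_coth {t : ℝ} (ht : 0 < t) : 1 / t ≤ Real.cosh t / Real.sinh t := by
  rw [div_le_div_iff₀ ht (Real.sinh_pos_iff.2 ht)]
  simpa [mul_comm] using sinh_le_mul_cosh ht.le

noncomputable def gmaj (d : ℕ) (σ t : ℝ) : ℝ :=
  (2 * Real.pi * Real.sinh (2 * t)) ^ (-(d : ℝ) / 2) *
    Real.exp (-(Real.cosh t / Real.sinh t) / 8) * t ^ (σ - 1)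

private lemma gmaj_nonneg (d : ℕ) (σ : ℝ) {t : ℝ} (ht : 0 < t) : 0 ≤ gmaj d σ t :=
  mul_nonneg (mul_nonneg (Real.rpow_nonneg (by positivity : (0:ℝ) ≤ 2 * Real.pi * Real.sinh (2*t)) _)
    (Real.exp_nonneg _)) (Real.rpow_nonneg ht.le _)

private lemma gmaj_contOn (d : ℕ) (σ : ℝ) : ContinuousOn (gmaj d σ) (Set.Ioi 0) := by
  apply ContinuousOn.mul
  · apply ContinuousOn.mul
    · apply ContinuousOn.rpow_const (Continuous.continuousOn (by continuity))
      intro t ht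
      have h2t : 0 < Real.sinh (2 * t) := Real.sinh_pos_iff.2 (by simp at ht; linarith)
      exact Or.inl (by positivity)
    · apply ContinuousOn.rexp
      have hdiv : ContinuousOn (fun t : ℝ => Real.cosh t / Real.sinh t) (Set.Ioi 0) :=
        ContinuousOn.div Real.continuous_cosh.continuousOn Real.continuous_sinh.continuousOn
          (fun t ht => ne_of_gt (Real.sinh_pos_iff.2 (Set.mem_Ioi.1 ht)))
      exact hdiv.neg.div_const 8
  · exact ContinuousOn.rpow_const continuousOn_id (fun t ht => Or.inl (ne_of_gt (Set.mem_Ioi.1 ht)))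

private lemma gmaj_integrable (d : ℕ) (hd : 1 ≤ d) {σ : ℝ} (hσ : 0 < σ) :
    IntegrableOn (gmaj d σ) (Set.Ioi 0) := by
  have hsplit : Set.Ioi (0:ℝ) = Set.Ioc 0 1 ∪ Set.Ioi 1 :=
    (Set.Ioc_union_Ioi_eq_Ioi (by norm_num)).symm
  rw [hsplit]
  apply IntegrableOn.union
  · -- on (0,1]
    have hmaj : IntegrableOn (fun t : ℝ => ((d.factorial : ℝ) * 8 ^ d) * t ^ (σ - 1))
        (Set.Ioc 0 1) := by
      have := (intervalIntegral.intervalIntegrable_rpow' (a := 0) (b := 1) (r := σ - 1) (by linarith))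
      rw [intervalIntegrable_iff_integrableOn_Ioc_of_le (by norm_num : (0:ℝ) ≤ 1)] at this
      exact this.const_mul _
    apply hmaj.integrable.mono'
    · exact ((gmaj_contOn d σ).mono Set.Ioc_subset_Ioi_self).aestronglyMeasurable measurableSet_Ioc
    · rw [ae_restrict_iff' measurableSet_Ioc]
      filter_upwards with t ht
      obtain ⟨ht0, ht1⟩ := ht
      rw [Real.norm_of_nonneg (gmaj_nonneg d σ ht0)]
      have hA : (2 * Real.pi * Real.sinh (2 * t)) ^ (-(d : ℝ) / 2) ≤ t ^ (-(d : ℝ) / 2) := by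
        apply Real.rpow_le_rpow_of_nonpos ht0 _
          (by rw [neg_div]; exact neg_nonpos.2 (by positivity))
        have hs : 2 * t < Real.sinh (2 * t) := Real.self_lt_sinh_iff.2 (by linarith)
        nlinarith [Real.pi_gt_three]
      have hE : Real.exp (-(Real.cosh t / Real.sinh t) / 8) ≤ (d.factorial : ℝ) * (8 * t) ^ d := by
        have h1 : Real.exp (-(Real.cosh t / Real.sinh t) / 8) ≤ Real.exp (-(1/(8*t))) := by
          apply Real.exp_le_exp.2
          have hc := inv_le_coth ht0
          have he : (1:ℝ)/(8*t) = (1/t)/8 := by ring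
          rw [he]
          linarith
        refine h1.trans ?_
        have hx : (0:ℝ) ≤ 1/(8*t) := by positivity
        have h2 := Real.pow_div_factorial_le_exp (x := 1/(8*t)) hx d
        rw [Real.exp_neg]
        rw [inv_le_iff_one_le_mul₀ (Real.exp_pos _)]
        have hfac : (d.factorial : ℝ) ≠ 0 := by positivity
        have h8t : (8:ℝ) * t ≠ 0 := by positivity
        calc (1:ℝ) = (d.factorial : ℝ) * (8*t)^d * ((1/(8*t))^d / d.factorial) := by
              rw [one_div, inv_pow]
              field_simp
          _ ≤ (d.factorial : ℝ) * (8*t)^d * Real.exp (1/(8*t)) := by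
              apply mul_le_mul_of_nonneg_left h2 (by positivity)
      calc gmaj d σ t ≤ (t ^ (-(d : ℝ) / 2) * ((d.factorial : ℝ) * (8 * t) ^ d)) * t ^ (σ - 1) := by
            unfold gmaj
            apply mul_le_mul_of_nonneg_right _ (Real.rpow_nonneg ht0.le _)
            apply mul_le_mul hA hE (Real.exp_nonneg _) (Real.rpow_nonneg ht0.le _)
        _ ≤ ((d.factorial : ℝ) * 8 ^ d) * t ^ (σ - 1) := by
            apply mul_le_mul_of_nonneg_right _ (Real.rpow_nonneg ht0.le _)
            have : t ^ (-(d : ℝ) / 2) * ((d.factorial : ℝ) * (8 * t) ^ d)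
                = ((d.factorial : ℝ) * 8 ^ d) * (t ^ (-(d : ℝ) / 2) * t ^ (d : ℝ)) := by
              rw [Real.rpow_natCast, mul_pow]; ring
            rw [this]
            have h3 : t ^ (-(d : ℝ) / 2) * t ^ (d : ℝ) = t ^ ((d : ℝ)/2) := by
              rw [← Real.rpow_add ht0]; ring_nf
            rw [h3]
            have h4 : t ^ ((d : ℝ)/2) ≤ 1 := Real.rpow_le_one ht0.le ht1 (by positivity)
            have h5 : (0:ℝ) ≤ (d.factorial : ℝ) * 8 ^ d := by positivity
            nlinarith
  · -- on (1,∞)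
    have hmaj : IntegrableOn
        (fun t : ℝ => (Real.pi/2) ^ (-(d : ℝ)/2) * (Real.exp (-t) * t ^ (σ - 1)))
        (Set.Ioi 1) := by
      exact ((Real.GammaIntegral_convergent hσ).mono_set
        (Set.Ioi_subset_Ioi (by norm_num))).const_mul _
    apply hmaj.integrable.mono'
    · exact ((gmaj_contOn d σ).mono (Set.Ioi_subset_Ioi (by norm_num))).aestronglyMeasurable
        measurableSet_Ioi
    · rw [ae_restrict_iff' measurableSet_Ioi]
      filter_upwards with t ht
      rw [Set.mem_Ioi] at ht
      have ht0 : (0:ℝ) < t := by linarith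
      rw [Real.norm_of_nonneg (gmaj_nonneg d σ ht0)]
      have hA : (2 * Real.pi * Real.sinh (2 * t)) ^ (-(d : ℝ) / 2)
          ≤ (Real.pi/2) ^ (-(d : ℝ)/2) * Real.exp (-t) := by
        have hb : Real.pi/2 * Real.exp (2*t) ≤ 2 * Real.pi * Real.sinh (2 * t) := by
          rw [Real.sinh_eq]
          have h1 : Real.exp (-(2*t)) ≤ Real.exp (2*t) / 4 := by
            have he1 : Real.exp (-(2*t)) * Real.exp (2*t) = 1 := by
              rw [← Real.exp_add]; simp
            have he2 : Real.exp (2*t) * Real.exp (2*t) = Real.exp (4*t) := by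
              rw [← Real.exp_add]; ring_nf
            have he3 : (5:ℝ) ≤ Real.exp (4*t) := by
              have := Real.add_one_le_exp (4*t); linarith
            nlinarith [Real.exp_pos (2*t), Real.exp_pos (-(2*t))]
          nlinarith [Real.pi_gt_three, Real.exp_pos (2*t)]
        calc (2 * Real.pi * Real.sinh (2 * t)) ^ (-(d : ℝ) / 2)
            ≤ (Real.pi/2 * Real.exp (2*t)) ^ (-(d : ℝ) / 2) :=
              Real.rpow_le_rpow_of_nonpos (by positivity) hb (by rw [neg_div]; exact neg_nonpos.2 (by positivity))
          _ = (Real.pi/2) ^ (-(d : ℝ)/2) * (Real.exp (2*t)) ^ (-(d : ℝ)/2) :=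
              Real.mul_rpow (by positivity) (Real.exp_nonneg _)
          _ ≤ (Real.pi/2) ^ (-(d : ℝ)/2) * Real.exp (-t) := by
              have hexp : (Real.exp (2*t)) ^ (-(d : ℝ)/2) ≤ Real.exp (-t) := by
                rw [← Real.exp_mul, Real.exp_le_exp]
                have hd1 : (1:ℝ) ≤ (d:ℝ) := by exact_mod_cast hd
                nlinarith
              exact mul_le_mul_of_nonneg_left hexp
                (Real.rpow_nonneg (by positivity : (0:ℝ) ≤ Real.pi/2) _)
      have hE : Real.exp (-(Real.cosh t / Real.sinh t) / 8) ≤ 1 := by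
        apply Real.exp_le_one_iff.2
        have := one_le_coth ht0
        linarith
      calc gmaj d σ t ≤ ((Real.pi/2) ^ (-(d : ℝ)/2) * Real.exp (-t) * 1) * t ^ (σ - 1) := by
            unfold gmaj
            apply mul_le_mul_of_nonneg_right _ (Real.rpow_nonneg ht0.le _)
            apply mul_le_mul hA hE (Real.exp_nonneg _)
              (mul_nonneg (Real.rpow_nonneg (by positivity) _) (Real.exp_nonneg _))
        _ = (Real.pi/2) ^ (-(d : ℝ)/2) * (Real.exp (-t) * t ^ (σ - 1)) := by ring

theorem stmt_5 (d : ℕ) (hd : 1 ≤ d) (σ : ℝ) (hσ : 0 < σ) :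
    ∃ C > 0, ∀ x y : EuclideanSpace ℝ (Fin d), 1 ≤ ‖x - y‖ →
      (Real.Gamma σ)⁻¹ *
        (∫ t in Set.Ioi (0:ℝ), hermiteHeatKernel d t x y * t ^ (σ - 1)) ≤
      C * Real.exp (-‖x - y‖ ^ 2 / 8) := by
  have hG : 0 < Real.Gamma σ := Real.Gamma_pos_of_pos hσ
  have hint := gmaj_integrable d hd hσ
  have hI0 : 0 ≤ ∫ t in Set.Ioi (0:ℝ), gmaj d σ t :=
    setIntegral_nonneg measurableSet_Ioi (fun t ht => gmaj_nonneg d σ (Set.mem_Ioi.1 ht))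
  refine ⟨(Real.Gamma σ)⁻¹ * (∫ t in Set.Ioi (0:ℝ), gmaj d σ t) + 1,
    add_pos_of_nonneg_of_pos (mul_nonneg (inv_nonneg.2 hG.le) hI0) one_pos, ?_⟩
  intro x y hxy
  have hr1 : (1:ℝ) ≤ ‖x - y‖ ^ 2 := by nlinarith [norm_nonneg (x - y)]
  have hbd : ∀ t ∈ Set.Ioi (0:ℝ), hermiteHeatKernel d t x y * t ^ (σ - 1)
      ≤ Real.exp (-‖x - y‖ ^ 2 / 8) * gmaj d σ t := by
    intro t ht
    rw [Set.mem_Ioi] at ht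
    have hA0 : (0:ℝ) ≤ (2 * Real.pi * Real.sinh (2 * t)) ^ (-(d : ℝ) / 2) :=
      Real.rpow_nonneg (by positivity) _
    have hP0 : (0:ℝ) ≤ t ^ (σ - 1) := Real.rpow_nonneg ht.le _
    have hc1 : (1:ℝ) ≤ Real.cosh t / Real.sinh t := one_le_coth ht
    have hT : (0:ℝ) ≤ Real.tanh t * ‖x + y‖ ^ 2 := by
      apply mul_nonneg _ (by positivity)
      rw [Real.tanh_eq_sinh_div_cosh]
      exact div_nonneg (Real.sinh_nonneg_iff.2 ht.le) (Real.cosh_pos t).le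
    have hexp : Real.exp (-(1 / 4) * (Real.tanh t * ‖x + y‖ ^ 2 +
        (Real.cosh t / Real.sinh t) * ‖x - y‖ ^ 2))
        ≤ Real.exp (-‖x - y‖ ^ 2 / 8) * Real.exp (-(Real.cosh t / Real.sinh t) / 8) := by
      rw [← Real.exp_add, Real.exp_le_exp]
      nlinarith [mul_nonneg (sub_nonneg.2 hc1) (sub_nonneg.2 hr1)]
    calc hermiteHeatKernel d t x y * t ^ (σ - 1)
        ≤ ((2 * Real.pi * Real.sinh (2 * t)) ^ (-(d : ℝ) / 2) *
            (Real.exp (-‖x - y‖ ^ 2 / 8) * Real.exp (-(Real.cosh t / Real.sinh t) / 8)))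
            * t ^ (σ - 1) := by
          unfold hermiteHeatKernel
          apply mul_le_mul_of_nonneg_right _ hP0
          exact mul_le_mul_of_nonneg_left hexp hA0
      _ = Real.exp (-‖x - y‖ ^ 2 / 8) * gmaj d σ t := by unfold gmaj; ring
  have hnn : ∀ t ∈ Set.Ioi (0:ℝ), 0 ≤ hermiteHeatKernel d t x y * t ^ (σ - 1) := by
    intro t ht
    rw [Set.mem_Ioi] at ht
    unfold hermiteHeatKernel
    exact mul_nonneg (mul_nonneg (Real.rpow_nonneg (by positivity) _) (Real.exp_nonneg _))
      (Real.rpow_nonneg ht.le _)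
  have hmono : (∫ t in Set.Ioi (0:ℝ), hermiteHeatKernel d t x y * t ^ (σ - 1))
      ≤ ∫ t in Set.Ioi (0:ℝ), Real.exp (-‖x - y‖ ^ 2 / 8) * gmaj d σ t := by
    apply integral_mono_of_nonneg
    · exact (ae_restrict_iff' measurableSet_Ioi).2 (Filter.Eventually.of_forall hnn)
    · exact hint.const_mul _
    · exact (ae_restrict_iff' measurableSet_Ioi).2 (Filter.Eventually.of_forall hbd)
  rw [integral_const_mul] at hmono
  calc (Real.Gamma σ)⁻¹ * (∫ t in Set.Ioi (0:ℝ), hermiteHeatKernel d t x y * t ^ (σ - 1))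
      ≤ (Real.Gamma σ)⁻¹ * (Real.exp (-‖x - y‖ ^ 2 / 8) * ∫ t in Set.Ioi (0:ℝ), gmaj d σ t) :=
        mul_le_mul_of_nonneg_left hmono (inv_nonneg.2 hG.le)
    _ = ((Real.Gamma σ)⁻¹ * ∫ t in Set.Ioi (0:ℝ), gmaj d σ t) * Real.exp (-‖x - y‖ ^ 2 / 8) := by
        ring
    _ ≤ ((Real.Gamma σ)⁻¹ * (∫ t in Set.Ioi (0:ℝ), gmaj d σ t) + 1) *
          Real.exp (-‖x - y‖ ^ 2 / 8) :=
        mul_le_mul_of_nonneg_right (by linarith) (Real.exp_nonneg _)
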